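/- Let p be a prime and let ℓ ≥ 1 and k ≥ 1 be integers. Then in ℤ[δ] one has the congruence [ℓ·p^k] ≡ [ℓ·p^{k−1}] · [p]^{p^{k−1}} · [ℓ]^{(p−1)·p^{k−1}} (mod p); equivalently, the images of the two sides in (ℤ/pℤ)[X] are equal. -/

import Mathlib

open Polynomial

/-- The quantum number polynomials `[n] ∈ ℤ[δ]`, defined by `[0] = 0`, `[1] = 1`,
`[n+2] = δ·[n+1] − [n]`. -/
noncomputable def qn : ℕ → Polynomial ℤ
  | 0 => 0
  | 1 => 1
  | n + 2 => X * qn (n + 1) - qn n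

lemma qn_add_two (n : ℕ) : qn (n + 2) = X * qn (n + 1) - qn n := rfl

/-- Key identity: `[m+2n] + [m] = D_n · [m+n]` where `D_n = dickson 1 1 n`. -/
lemma qn_key : ∀ n m : ℕ, qn (m + 2 * n) + qn m = dickson 1 (1 : ℤ) n * qn (m + n) := by
  intro n
  induction n using Nat.strong_induction_on with
  | _ n ih =>
    match n with
    | 0 => intro m; simp [dickson_zero]; ring
    | 1 =>
      intro m
      rw [dickson_one]
      have : m + 2 * 1 = m + 2 := by ring
      rw [this, qn_add_two]
      ring
    | (n + 2) =>
      intro m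
      have h1 := ih (n + 1) (by omega) (m + 1)
      have h2 := ih n (by omega) (m + 2)
      rw [dickson_add_two, C_1]
      have e1 : m + 2 * (n + 2) = (m + 2 * n + 2) + 2 := by ring
      have e2 : m + 1 + 2 * (n + 1) = m + 2 * n + 2 + 1 := by ring
      have e3 : m + 2 + 2 * n = m + 2 * n + 2 := by ring
      have e4 : m + 1 + (n + 1) = m + n + 2 := by ring
      have e5 : m + 2 + n = m + n + 2 := by ring
      rw [e2, e4] at h1
      rw [e3, e5] at h2
      rw [qn_add_two m] at h2
      have e6 : m + (n + 2) = m + n + 2 := by ring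
      rw [e1, e6, qn_add_two (m + 2 * n + 2)]
      linear_combination X * h1 - h2

/-- Multiplication formula: `[m·n] = [m](D_n) · [n]`. -/
lemma qn_mul : ∀ m n : ℕ, qn (m * n) = (qn m).comp (dickson 1 (1 : ℤ) n) * qn n := by
  intro m
  induction m using Nat.strong_induction_on with
  | _ m ih =>
    match m with
    | 0 => intro n; simp [qn]
    | 1 => intro n; simp [qn, one_mul]
    | (m + 2) =>
      intro n
      have h1 := ih (m + 1) (by omega) n
      have h2 := ih m (by omega) n
      have e1 : (m + 2) * n = m * n + 2 * n := by ring
      have e2 : m * n + n = (m + 1) * n := by ring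
      have hk := qn_key n (m * n)
      rw [e2] at hk
      rw [h1, h2] at hk
      rw [e1, qn_add_two, sub_comp, mul_comp, X_comp]
      linear_combination hk

/-- Mod `p`: `[m·p] ≡ [m]^p · [p]`. -/
lemma qn_mul_p_mod (p : ℕ) [Fact p.Prime] (m : ℕ) :
    (qn (m * p)).map (Int.castRingHom (ZMod p)) =
      ((qn m).map (Int.castRingHom (ZMod p))) ^ p *
        (qn p).map (Int.castRingHom (ZMod p)) := by
  rw [qn_mul m p, Polynomial.map_mul, Polynomial.map_comp, map_dickson, map_one,
    dickson_one_one_zmod_p, ← expand_eq_comp_X_pow]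
  congr 1
  have := map_frobenius_expand p ((qn m).map (Int.castRingHom (ZMod p)))
  rwa [ZMod.frobenius_zmod, Polynomial.map_id] at this

/-- For a prime `p` and integers `ℓ, k ≥ 1`,
`[ℓ·p^k] ≡ [ℓ·p^(k−1)] · [p]^(p^(k−1)) · [ℓ]^((p−1)·p^(k−1)) (mod p)` in `ℤ[δ]`. -/
theorem qn_mul_prime_pow_mod (p : ℕ) (hp : p.Prime) (ℓ k : ℕ) (hℓ : 1 ≤ ℓ) (hk : 1 ≤ k) :
    (qn (ℓ * p ^ k)).map (Int.castRingHom (ZMod p)) =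
      (qn (ℓ * p ^ (k - 1)) * (qn p) ^ (p ^ (k - 1)) *
        (qn ℓ) ^ ((p - 1) * p ^ (k - 1))).map (Int.castRingHom (ZMod p)) := by

  haveI : Fact p.Prime := ⟨hp⟩
  have hp1 : 1 ≤ p := hp.one_lt.le.trans' (by norm_num)
  induction k, hk using Nat.le_induction with
  | base =>
    simp only [pow_one, Nat.sub_self, pow_zero, mul_one]
    rw [qn_mul_p_mod]
    simp only [Polynomial.map_mul, Polynomial.map_pow]
    have hc : ((qn ℓ).map (Int.castRingHom (ZMod p))) ^ p =
        (qn ℓ).map (Int.castRingHom (ZMod p)) *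
          ((qn ℓ).map (Int.castRingHom (ZMod p))) ^ (p - 1) := by
      rw [mul_comm, ← pow_succ]
      congr 1
      omega
    rw [hc]; ring
  | succ k hk ihk =>
    simp only [Nat.add_sub_cancel]
    have hpk1 : p ^ (k - 1) * p = p ^ k := by
      conv_rhs => rw [show k = (k - 1) + 1 from by omega, pow_succ]
    have hpk2 : (p - 1) * p ^ (k - 1) * p = (p - 1) * p ^ k := by
      rw [mul_assoc, hpk1]
    have e : ℓ * p ^ (k + 1) = (ℓ * p ^ k) * p := by rw [pow_succ]; ring
    have e2 : ℓ * p ^ k = (ℓ * p ^ (k - 1)) * p := by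
      conv_lhs => rw [show k = (k - 1) + 1 from by omega, pow_succ]
      ring
    have h2 := qn_mul_p_mod p (ℓ * p ^ (k - 1))
    rw [← e2] at h2
    rw [e, qn_mul_p_mod]
    simp only [Polynomial.map_mul, Polynomial.map_pow] at ihk h2 ⊢
    conv_rhs => rw [h2]
    rw [ihk, mul_pow, mul_pow, ← pow_mul, ← pow_mul, hpk1, hpk2]
    ring
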